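/- Let R be a commutative von Neumann regular ring with identity. Then no nonzero finitely generated ideal of R is a sa-small ideal of R. -/

import Mathlib

open Submodule

/-- A submodule `N` of `M` is small (superfluous) in `M`: for every submodule `L`,
`N + L = M` implies `L = M`. -/
def IsSmallSubmodule {R M : Type*} [CommRing R] [AddCommGroup M] [Module R M]
    (N : Submodule R M) : Prop :=
  ∀ L : Submodule R M, N ⊔ L = ⊤ → L = ⊤

/-- `N` is a semiannihilator-small (sa-small) submodule of `M`: for every submodule `L`
with `N + L = M`, the annihilator of `L` is a small ideal of `R`. -/
def IsSaSmall {R M : Type*} [CommRing R] [AddCommGroup M] [Module R M]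
    (N : Submodule R M) : Prop :=
  ∀ L : Submodule R M, N ⊔ L = ⊤ → IsSmallSubmodule (Submodule.annihilator L : Ideal R)

/-- In a commutative von Neumann regular ring, every f.g. ideal is generated by an
idempotent. -/
lemma fg_span_idempotent {R : Type*} [CommRing R]
    (hvnr : ∀ a : R, ∃ b : R, a = a * b * a)
    (I : Ideal R) (hfg : I.FG) :
    ∃ e : R, e * e = e ∧ I = Ideal.span {e} := by
  refine Submodule.fg_induction (motive := fun (J : Ideal R) _ => ∃ e : R, e * e = e ∧ J = Ideal.span {e})
    ?_ ?_ I hfg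
  · intro a
    obtain ⟨b, hb⟩ := hvnr a
    refine ⟨b * a, by linear_combination (-b) * hb, ?_⟩
    show Ideal.span {a} = Ideal.span {b * a}
    apply le_antisymm
    · rw [Ideal.span_singleton_le_iff_mem, Ideal.mem_span_singleton]
      exact ⟨a, by linear_combination hb⟩
    · rw [Ideal.span_singleton_le_iff_mem, Ideal.mem_span_singleton]
      exact ⟨b, by ring⟩
  · rintro M N - - ⟨e, he, rfl⟩ ⟨f, hf, rfl⟩
    refine ⟨e + f - e * f, by linear_combination (1 - f)^2 * he + (1 - e) * hf, ?_⟩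
    apply le_antisymm
    · rw [sup_le_iff, Ideal.span_singleton_le_iff_mem, Ideal.span_singleton_le_iff_mem]
      constructor
      · exact Ideal.mem_span_singleton.2 ⟨e, by linear_combination (f - 1) * he⟩
      · exact Ideal.mem_span_singleton.2 ⟨f, by linear_combination (e - 1) * hf⟩
    · rw [Ideal.span_singleton_le_iff_mem]
      have h1 : e ∈ Ideal.span {e} ⊔ Ideal.span {f} :=
        Submodule.mem_sup_left (Ideal.subset_span (Set.mem_singleton e))
      have h2 : f - e * f ∈ Ideal.span {e} ⊔ Ideal.span {f} := by
        refine Submodule.mem_sup_right (Ideal.mem_span_singleton.2 ⟨1 - e, by ring⟩)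
      have := Submodule.add_mem _ h1 h2
      simpa [add_sub_assoc] using this

/-- In a commutative von Neumann regular ring, no nonzero finitely
generated ideal is a sa-small ideal. -/
theorem not_saSmall_of_fg_vonNeumannRegular {R : Type*} [CommRing R] [Nontrivial R]
    (hvnr : ∀ a : R, ∃ b : R, a = a * b * a)
    (I : Ideal R) (hI : I ≠ ⊥) (hfg : I.FG) :
    ¬ IsSaSmall (R := R) (M := R) I := by
  obtain ⟨e, he, rfl⟩ := fg_span_idempotent hvnr I hfg
  have he0 : e ≠ 0 := fun h => hI (by simp [h, Ideal.span_singleton_eq_bot])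
  intro hsa
  set L : Ideal R := Ideal.span {1 - e} with hL
  have hsup : Ideal.span {e} ⊔ L = ⊤ := by
    have h1 : (1 : R) = e + (1 - e) := by ring
    rw [Ideal.eq_top_iff_one, h1]
    exact Submodule.add_mem _
      (Submodule.mem_sup_left (Ideal.subset_span (Set.mem_singleton e)))
      (Submodule.mem_sup_right (Ideal.subset_span (Set.mem_singleton (1 - e))))
  have hLne : L ≠ ⊤ := by
    intro hLt
    have h1 : (1 : R) ∈ L := hLt ▸ Submodule.mem_top
    obtain ⟨c, hc⟩ := Ideal.mem_span_singleton'.1 h1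
    exact he0 (by linear_combination (-e) * hc + (-c) * he)
  apply hLne
  apply hsa L hsup L
  have hIle : Ideal.span {e} ≤ Submodule.annihilator L := by
    rw [Ideal.span_singleton_le_iff_mem, Submodule.mem_annihilator]
    intro n hn
    obtain ⟨c, hc⟩ := Ideal.mem_span_singleton'.1 hn
    rw [smul_eq_mul]
    linear_combination (-e) * hc + (-c) * he
  rw [eq_top_iff, ← hsup]
  exact sup_le_sup_right hIle L
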